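/- Let F be a field of characteristic p ≥ t, t ≥ 2, n ≥ t, and identify the Hankel determinantal ring R with the F-subalgebra of S = F[u_1,...,u_{t-1},v_1,...,v_{t-1}] generated by h_i = Σ_j u_j^{n+t-2-i} v_j^i, 0 ≤ i ≤ n+t-2. If a linear combination r = Σ λ_{i_1...i_{t-1}} h_{i_1}···h_{i_{t-1}} over indices t-1 ≤ i_1 ≤ ... ≤ i_{t-1} ≤ n-1 lies in the ideal (u_1^n,...,u_{t-1}^n, v_1^n,...,v_{t-1}^n)S, then all coefficients λ_{i_1...i_{t-1}} are zero. -/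

import Mathlib

set_option synthInstance.maxHeartbeats 1000000
set_option maxHeartbeats 1000000

open MvPolynomial

lemma hankel_aux_prod_monomial {σ R ι : Type*} [CommSemiring R] (s : Finset ι)
    (c : ι → (σ →₀ ℕ)) :
    ∏ i ∈ s, (monomial (c i) (1 : R)) = monomial (∑ i ∈ s, c i) 1 := by
  induction s using Finset.cons_induction with
  | empty => simp
  | cons a s ha ih => rw [Finset.prod_cons, Finset.sum_cons, ih, monomial_mul, one_mul]

theorem hankel_socle_coefficients (F : Type*) [Field F] (p t n : ℕ) [CharP F p]
    (hp : p.Prime) (hpt : t ≤ p) (ht : 2 ≤ t) (htn : t ≤ n)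
    (h : ℕ → MvPolynomial (Fin (t - 1) ⊕ Fin (t - 1)) F)
    (hh : ∀ i ≤ n + t - 2, h i = ∑ j : Fin (t - 1),
      (X (Sum.inl j)) ^ (n + t - 2 - i) * (X (Sum.inr j)) ^ i)
    (lam : ((Fin (t - 1)) → Fin n) → F)
    (hsupp : ∀ k : Fin (t - 1) → Fin n,
      ¬ (Monotone k ∧ ∀ i, t - 1 ≤ (k i : ℕ) ∧ (k i : ℕ) ≤ n - 1) → lam k = 0)
    (r : MvPolynomial (Fin (t - 1) ⊕ Fin (t - 1)) F)
    (hr : r = ∑ k : Fin (t - 1) → Fin n, C (lam k) * ∏ i : Fin (t - 1), h (k i))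
    (hmem : r ∈ Ideal.span {q : MvPolynomial (Fin (t - 1) ⊕ Fin (t - 1)) F |
      ∃ j : Fin (t - 1), q = X (Sum.inl j) ^ n ∨ q = X (Sum.inr j) ^ n}) :
    ∀ k, lam k = 0 := by
  classical
  intro m
  by_cases hmc : Monotone m ∧ ∀ i, t - 1 ≤ (m i : ℕ) ∧ (m i : ℕ) ≤ n - 1
  swap
  · exact hsupp m hmc
  obtain ⟨hmono, hrange⟩ := hmc
  set a := n + t - 2 with ha
  have hapos : 0 < a := by omega
  set E : (Fin (t-1) → Fin n) → (Fin (t-1) → Fin (t-1)) → ((Fin (t-1) ⊕ Fin (t-1)) →₀ ℕ) :=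
    fun k σ => ∑ i : Fin (t-1), (Finsupp.single (Sum.inl (σ i)) (a - (k i : ℕ)) +
      Finsupp.single (Sum.inr (σ i)) ((k i : ℕ))) with hE
  set d := E m id with hd
  have hEl : ∀ (k : Fin (t-1) → Fin n) (σ : Fin (t-1) → Fin (t-1)) (j : Fin (t-1)),
      E k σ (Sum.inl j) = ∑ i : Fin (t-1), if σ i = j then a - (k i : ℕ) else 0 := by
    intro k σ j
    rw [hE]
    rw [Finset.sum_apply']
    refine Finset.sum_congr rfl fun i _ => ?_
    rw [Finsupp.add_apply, Finsupp.single_apply, Finsupp.single_apply]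
    by_cases hc : σ i = j <;> simp [hc]
  have hEr : ∀ (k : Fin (t-1) → Fin n) (σ : Fin (t-1) → Fin (t-1)) (j : Fin (t-1)),
      E k σ (Sum.inr j) = ∑ i : Fin (t-1), if σ i = j then (k i : ℕ) else 0 := by
    intro k σ j
    rw [hE]
    rw [Finset.sum_apply']
    refine Finset.sum_congr rfl fun i _ => ?_
    rw [Finsupp.add_apply, Finsupp.single_apply, Finsupp.single_apply]
    by_cases hc : σ i = j <;> simp [hc]
  have hdl : ∀ j, d (Sum.inl j) = a - (m j : ℕ) := by
    intro j
    rw [hd, hEl]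
    simp [Finset.sum_ite_eq']
  have hdr' : ∀ j, d (Sum.inr j) = (m j : ℕ) := by
    intro j
    rw [hd, hEr]
    simp [Finset.sum_ite_eq']
  -- Step A : ideal membership forces coefficient zero
  have hsub : ∀ e ∈ r.support, ∃ j : Fin (t-1), n ≤ e (Sum.inl j) ∨ n ≤ e (Sum.inr j) := by
    refine Submodule.span_induction
      (p := fun x _ => ∀ e ∈ x.support, ∃ j : Fin (t-1),
        n ≤ e (Sum.inl j) ∨ n ≤ e (Sum.inr j)) ?_ ?_ ?_ ?_ hmem
    · rintro x ⟨j, hx | hx⟩ e he <;> subst hx <;>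
        rw [mem_support_iff, coeff_X_pow] at he
      · have hse : Finsupp.single (Sum.inl j : Fin (t-1) ⊕ Fin (t-1)) n = e := by
          by_contra h'; simp [h'] at he
        exact ⟨j, Or.inl (by rw [← hse]; simp)⟩
      · have hse : Finsupp.single (Sum.inr j : Fin (t-1) ⊕ Fin (t-1)) n = e := by
          by_contra h'; simp [h'] at he
        exact ⟨j, Or.inr (by rw [← hse]; simp)⟩
    · simp
    · intro x y hx hy ihx ihy e he
      rcases Finset.mem_union.mp (MvPolynomial.support_add he) with h' | h'
      · exact ihx e h'
      · exact ihy e h'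
    · intro c x hx ihx e he
      rw [smul_eq_mul] at he
      obtain ⟨e1, he1, e2, he2, rfl⟩ := Finset.mem_add.mp (MvPolynomial.support_mul c x he)
      obtain ⟨j, hj⟩ := ihx e2 he2
      refine ⟨j, ?_⟩
      rcases hj with hj | hj
      · exact Or.inl (by simp [Finsupp.add_apply]; omega)
      · exact Or.inr (by simp [Finsupp.add_apply]; omega)
  have hdr0 : coeff d r = 0 := by
    by_contra hc
    obtain ⟨j, hj⟩ := hsub d (mem_support_iff.mpr hc)
    have h1 := hdl j
    have h2 := hdr' j
    have h3 := hrange j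
    rcases hj with hj | hj <;> omega
  -- Step B : expansion of the products
  have hprod : ∀ k : Fin (t-1) → Fin n, (∏ i : Fin (t-1), h (k i)) =
      ∑ σ : Fin (t-1) → Fin (t-1), monomial (E k σ) (1 : F) := by
    intro k
    have h1 : ∀ i : Fin (t-1), h (k i) = ∑ j : Fin (t-1),
        monomial (Finsupp.single (Sum.inl j) (a - (k i : ℕ)) +
          Finsupp.single (Sum.inr j) ((k i : ℕ))) (1 : F) := by
      intro i
      rw [hh (k i) (by have := (k i).isLt; omega)]
      refine Finset.sum_congr rfl fun j _ => ?_
      rw [X_pow_eq_monomial, X_pow_eq_monomial, monomial_mul, one_mul]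
    rw [Finset.prod_congr rfl fun i _ => h1 i, Finset.prod_univ_sum]
    refine Finset.sum_congr rfl fun σ _ => ?_
    rw [hankel_aux_prod_monomial]
  have hcoeffprod : ∀ k, coeff d (∏ i : Fin (t-1), h (k i)) =
      ((Finset.univ.filter fun σ : Fin (t-1) → Fin (t-1) => E k σ = d).card : F) := by
    intro k
    rw [hprod, coeff_sum]
    simp only [coeff_monomial]
    exact Finset.sum_boole _ _
  -- Step C forward
  have hforce : ∀ (k : Fin (t-1) → Fin n), Monotone k →
      (∀ i, t - 1 ≤ (k i : ℕ) ∧ (k i : ℕ) ≤ n - 1) →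
      ∀ σ : Fin (t-1) → Fin (t-1), E k σ = d →
      k = m ∧ Function.Bijective σ ∧ (m ∘ σ = m) := by
    intro k hkmono hkrange σ hEkσ
    have h1 : ∀ j, (∑ i : Fin (t-1), if σ i = j then a - (k i : ℕ) else 0) = a - (m j : ℕ) :=
      fun j => by rw [← hEl k σ j, hEkσ, hdl]
    have h2 : ∀ j, (∑ i : Fin (t-1), if σ i = j then (k i : ℕ) else 0) = (m j : ℕ) :=
      fun j => by rw [← hEr k σ j, hEkσ, hdr']
    have hcard : ∀ j, (Finset.univ.filter fun i => σ i = j).card = 1 := by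
      intro j
      have h3 : (∑ i : Fin (t-1), if σ i = j then a else 0) = a := by
        have heach : ∀ i : Fin (t-1), (if σ i = j then a else 0) =
            (if σ i = j then a - (k i : ℕ) else 0) + (if σ i = j then (k i : ℕ) else 0) := by
          intro i
          by_cases hij : σ i = j <;> simp [hij]
          have := (k i).isLt; omega
        rw [Finset.sum_congr rfl fun i _ => heach i, Finset.sum_add_distrib, h1, h2]
        have := hrange j; omega
      rw [← Finset.sum_filter, Finset.sum_const, smul_eq_mul] at h3
      exact Nat.eq_of_mul_eq_mul_right hapos (by rw [h3, one_mul])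
    have hbij : Function.Bijective σ := by
      constructor
      · intro i1 i2 h12
        by_contra hne
        have hsub2 : ({i1, i2} : Finset (Fin (t-1))) ⊆
            Finset.univ.filter fun i => σ i = σ i2 := by
          intro x hx
          simp only [Finset.mem_insert, Finset.mem_singleton] at hx
          rcases hx with rfl | rfl
          · simp [h12]
          · simp
        have hle := Finset.card_le_card hsub2
        rw [hcard, Finset.card_insert_of_notMem (by simpa using hne),
          Finset.card_singleton] at hle
        omega
      · intro j
        obtain ⟨i, hi⟩ := Finset.card_eq_one.mp (hcard j)
        refine ⟨i, ?_⟩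
        have : i ∈ Finset.univ.filter fun i => σ i = j := by
          rw [hi]; exact Finset.mem_singleton_self i
        exact (Finset.mem_filter.mp this).2
    set e := Equiv.ofBijective σ hbij with he
    have hcompe : ∀ i, k i = m (e i) := by
      intro i
      have h2' := h2 (e i)
      have hcond : ∀ i' : Fin (t-1), (σ i' = e i) ↔ (i' = i) := by
        intro i'
        constructor
        · intro hh'
          exact hbij.1 hh'
        · rintro rfl; rfl
      rw [Finset.sum_congr rfl (fun i' _ => by rw [if_congr (hcond i') rfl rfl]),
        Finset.sum_ite_eq' Finset.univ i (fun i' => ((k i' : ℕ)))] at h2'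
      simp only [Finset.mem_univ, if_true] at h2'
      exact Fin.ext h2'
    have hkm : k = m ∘ e := funext fun i => by rw [hcompe i]; rfl
    have huniq : m ∘ ⇑e = m := by
      have h4 : (m ∘ ⇑e) = m ∘ ⇑(1 : Equiv.Perm (Fin (t-1))) :=
        Tuple.unique_monotone (by rw [← hkm]; exact hkmono) (by simpa using hmono)
      simpa using h4
    refine ⟨?_, hbij, ?_⟩
    · rw [hkm, huniq]
    · have hce : ⇑e = σ := rfl
      rw [← hce]; exact huniq
  -- Step C backward for m
  have hback : ∀ σ : Fin (t-1) → Fin (t-1), Function.Bijective σ → m ∘ σ = m → E m σ = d := by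
    intro σ hbij hfix
    set e := Equiv.ofBijective σ hbij with he
    have key : ∀ j (i' : Fin (t-1)), (σ i' = j) ↔ (i' = e.symm j) := by
      intro j i'
      constructor
      · intro hh'
        apply e.injective
        rw [e.apply_symm_apply]
        exact hh'
      · rintro rfl
        show σ (e.symm j) = j
        exact e.apply_symm_apply j
    have hmfix : ∀ j, (m (e.symm j) : ℕ) = (m j : ℕ) := by
      intro j
      have h5 := congrFun hfix (e.symm j)
      simp only [Function.comp_apply] at h5
      have h6 : σ (e.symm j) = j := e.apply_symm_apply j
      rw [h6] at h5
      exact congrArg Fin.val h5.symm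
    apply Finsupp.ext
    intro x
    cases x with
    | inl j =>
      rw [hEl, hdl,
        Finset.sum_congr rfl (fun i' _ => by rw [if_congr (key j i') rfl rfl]),
        Finset.sum_ite_eq' Finset.univ (e.symm j) (fun i' => a - (m i' : ℕ))]
      simp [hmfix j]
    | inr j =>
      rw [hEr, hdr',
        Finset.sum_congr rfl (fun i' _ => by rw [if_congr (key j i') rfl rfl]),
        Finset.sum_ite_eq' Finset.univ (e.symm j) (fun i' => (m i' : ℕ))]
      simp [hmfix j]
  -- Step D : the cardinality is invertible
  set N := (Finset.univ.filter fun σ : Fin (t-1) → Fin (t-1) => E m σ = d).card with hN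
  let H : Subgroup (Equiv.Perm (Fin (t-1))) :=
    { carrier := {σ | m ∘ ⇑σ = m}
      one_mem' := by funext i; rfl
      mul_mem' := by
        intro σ τ hσ hτ
        funext i
        show m (σ (τ i)) = m i
        have h7 := congrFun hσ (τ i)
        have h8 := congrFun hτ i
        simp only [Function.comp_apply] at h7 h8
        rw [h7, h8]
      inv_mem' := by
        intro σ hσ
        funext i
        show m (σ⁻¹ i) = m i
        have h7 := congrFun hσ (σ⁻¹ i)
        simp only [Function.comp_apply, Equiv.Perm.inv_def, Equiv.apply_symm_apply] at h7
        exact h7.symm }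
  have hcardH : N = Nat.card H := by
    rw [Nat.card_eq_fintype_card, hN, ← Fintype.card_subtype]
    refine (Fintype.card_congr ?_).symm
    exact
      { toFun := fun es => ⟨⇑es.1, hback _ es.1.bijective es.2⟩
        invFun := fun σs => ⟨Equiv.ofBijective σs.1 (hforce m hmono hrange σs.1 σs.2).2.1,
          (hforce m hmono hrange σs.1 σs.2).2.2⟩
        left_inv := fun es => Subtype.ext (Equiv.ext fun i => rfl)
        right_inv := fun σs => Subtype.ext rfl }
  have hNpos : 0 < N := Finset.card_pos.mpr ⟨id, Finset.mem_filter.mpr ⟨Finset.mem_univ _, rfl⟩⟩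
  have hdvd : N ∣ (t-1).factorial := by
    rw [hcardH]
    have h8 := Subgroup.card_subgroup_dvd_card H
    rwa [Nat.card_eq_fintype_card (α := Equiv.Perm (Fin (t-1))), Fintype.card_perm,
      Fintype.card_fin] at h8
  have hNF : (N : F) ≠ 0 := by
    intro h0
    rw [CharP.cast_eq_zero_iff F p] at h0
    have hple := (Nat.Prime.dvd_factorial hp).mp (h0.trans hdvd)
    omega
  -- Step E : conclude
  have hsum : coeff d r = lam m * (N : F) := by
    rw [hr, coeff_sum]
    simp only [coeff_C_mul]
    rw [Finset.sum_eq_single m]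
    · rw [hcoeffprod]
    · intro k _ hkm
      by_cases hc : Monotone k ∧ ∀ i, t - 1 ≤ (k i : ℕ) ∧ (k i : ℕ) ≤ n - 1
      · rw [hcoeffprod]
        have hemp : (Finset.univ.filter fun σ : Fin (t-1) → Fin (t-1) => E k σ = d) = ∅ := by
          rw [Finset.filter_eq_empty_iff]
          intro σ _
          intro hσ
          exact hkm ((hforce k hc.1 hc.2 σ hσ).1)
        rw [hemp]
        simp
      · rw [hsupp k hc, zero_mul]
    · intro hm'
      exact absurd (Finset.mem_univ m) hm'
  have hfin : lam m * (N : F) = 0 := hsum.symm.trans hdr0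
  rcases mul_eq_zero.mp hfin with h' | h'
  · exact h'
  · exact absurd h' hNF
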